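/- For a positive function φ on ℝ_q⁺ with ∫₀^∞ φ(x) x^{2v+1} d_q x = 1 and finite a-th moment M_a(φ)^a = ∫₀^∞ |x|^a φ(x) x^{2v+1} d_q x, the entropy E(φ) = ∫₀^∞ φ(x) log φ(x) x^{2v+1} d_q x satisfies -E(φ) ≤ log k_c + c^a M_a(φ)^a for every c ∈ ℝ_q⁺, where k_c = σ_a / c^{2v+2} and σ_a = ∫₀^∞ exp(-|x|^a) x^{2v+1} d_q x. -/

import Mathlib

open scoped BigOperators
open Real Filter

/-- Finite q-Pochhammer symbol (a;q)_n. -/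
noncomputable def qPoch (a q : ℝ) (n : ℕ) : ℝ := ∏ k ∈ Finset.range n, (1 - a * q ^ k)

/-- Infinite q-Pochhammer symbol (a;q)_∞. -/
noncomputable def qPochInf (a q : ℝ) : ℝ := ∏' n : ℕ, (1 - a * q ^ n)

/-- Normalized Hahn-Exton q-Bessel function j_v(x, q²). -/
noncomputable def qBesselJ (q v x : ℝ) : ℝ :=
  ∑' n : ℕ, (-1 : ℝ) ^ n * q ^ (n * (n + 1)) /
    (qPoch (q ^ (2 * v + 2)) (q ^ 2) n * qPoch (q ^ 2) (q ^ 2) n) * x ^ (2 * n)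

/-- The q-Jackson integral ∫₀^∞ f(t) d_q t = (1-q) Σ_{n∈ℤ} qⁿ f(qⁿ). -/
noncomputable def qInt (q : ℝ) (f : ℝ → ℝ) : ℝ := (1 - q) * ∑' n : ℤ, q ^ n * f (q ^ n)

/-- The constant c_{q,v}. -/
noncomputable def qBesselC (q v : ℝ) : ℝ :=
  (1 / (1 - q)) * qPochInf (q ^ (2 * v + 2)) (q ^ 2) / qPochInf (q ^ 2) (q ^ 2)

/-- The q-Bessel Fourier transform F_{q,v}. -/
noncomputable def qFourier (q v : ℝ) (f : ℝ → ℝ) (x : ℝ) : ℝ :=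
  qBesselC q v * qInt q (fun t => f t * qBesselJ q v (x * t) * t ^ (2 * v + 1))

/-- Membership in L^p_{q,v}: even on ℝ_q and p-th power summable on the q-lattice. -/
def qMemLp (q v p : ℝ) (f : ℝ → ℝ) : Prop :=
  (∀ x, f (-x) = f x) ∧
    Summable (fun n : ℤ => q ^ n * (|f (q ^ n)| ^ p * ((q : ℝ) ^ n) ^ (2 * v + 1)))

/-- The norm ‖f‖_{q,p,v}. -/
noncomputable def qNorm (q v p : ℝ) (f : ℝ → ℝ) : ℝ :=
  (qInt q (fun x => |f x| ^ p * x ^ (2 * v + 1))) ^ (1 / p)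

/-- The q-translation operator T^v_{q,x}. -/
noncomputable def qTrans (q v x : ℝ) (f : ℝ → ℝ) (y : ℝ) : ℝ :=
  qBesselC q v * qInt q (fun t =>
    qFourier q v f t * qBesselJ q v (y * t) * qBesselJ q v (x * t) * t ^ (2 * v + 1))

/-- The q-convolution product f *_q g. -/
noncomputable def qConv (q v : ℝ) (f g : ℝ → ℝ) (x : ℝ) : ℝ :=
  qBesselC q v * qInt q (fun y => qTrans q v x f y * g y * y ^ (2 * v + 1))

/-- q belongs to the positivity domain Q_v: the q-translation is positive. -/
def qPosDomain (q v : ℝ) : Prop :=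
  ∀ (f : ℝ → ℝ) (x : ℝ), (∀ y, 0 ≤ f y) → ∀ y, 0 ≤ qTrans q v x f y

/-- The constant B_{q,v} of the Hausdorff-Young inequality. -/
noncomputable def qB (q v : ℝ) : ℝ :=
  (1 / (1 - q)) * (qPochInf (-(q ^ 2)) (q ^ 2) * qPochInf (-(q ^ (2 * v + 2))) (q ^ 2)) /
    qPochInf (q ^ 2) (q ^ 2)

/-- σ_a = ∫₀^∞ exp(-|x|^a) x^{2v+1} d_q x. -/
noncomputable def qSigma (q v a : ℝ) : ℝ :=
  qInt q (fun x => Real.exp (-(|x| ^ a)) * x ^ (2 * v + 1))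

/-- The entropy E(φ) = ∫₀^∞ φ log φ · x^{2v+1} d_q x. -/
noncomputable def qEntropy (q v : ℝ) (φ : ℝ → ℝ) : ℝ :=
  qInt q (fun x => φ x * Real.log (φ x) * x ^ (2 * v + 1))

/-- The q-exponential e(z,q) = 1/(z;q)_∞. -/
noncomputable def qExpF (z q : ℝ) : ℝ := (qPochInf z q)⁻¹

/-- The q-Gauss kernel G^v(x, t², q²). -/
noncomputable def qGauss (q v x t : ℝ) : ℝ :=
  (qPochInf (-(q ^ (2 * v + 2)) * t ^ 2) (q ^ 2) * qPochInf (-(q ^ (-(2 * v))) / t ^ 2) (q ^ 2)) /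
    (qPochInf (-(t ^ 2)) (q ^ 2) * qPochInf (-(q ^ 2) / t ^ 2) (q ^ 2)) *
    qExpF (-(q ^ (-(2 * v))) / t ^ 2 * x ^ 2) (q ^ 2)

/-- The q-Bessel operator Δ_{q,v}. -/
noncomputable def qBesselOp (q v : ℝ) (f : ℝ → ℝ) (x : ℝ) : ℝ :=
  (1 / x ^ 2) * (f (q⁻¹ * x) - (1 + q ^ (2 * v)) * f x + q ^ (2 * v) * f (q * x))

theorem qEntropy_moment_bound (q v a : ℝ) (hq0 : 0 < q) (hq1 : q < 1) (hv : -1 < v)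
    (ha : 0 < a) (φ : ℝ → ℝ) (hφpos : ∀ n : ℤ, 0 < φ (q ^ n))
    (hφ1 : qInt q (fun x => φ x * x ^ (2 * v + 1)) = 1)
    (hφsum : Summable (fun n : ℤ => q ^ n * (φ (q ^ n) * ((q : ℝ) ^ n) ^ (2 * v + 1))))
    (hM : Summable (fun n : ℤ =>
      q ^ n * (|(q : ℝ) ^ n| ^ a * φ (q ^ n) * ((q : ℝ) ^ n) ^ (2 * v + 1))))
    (hE : Summable (fun n : ℤ =>
      q ^ n * (φ (q ^ n) * Real.log (φ (q ^ n)) * ((q : ℝ) ^ n) ^ (2 * v + 1))))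
    (hσ : Summable (fun n : ℤ =>
      q ^ n * (Real.exp (-(|(q : ℝ) ^ n| ^ a)) * ((q : ℝ) ^ n) ^ (2 * v + 1))))
    (c : ℝ) (hc : ∃ m : ℤ, c = q ^ m) :
    -qEntropy q v φ ≤ Real.log (qSigma q v a / c ^ (2 * v + 2)) +
      c ^ a * qInt q (fun x => |x| ^ a * φ x * x ^ (2 * v + 1)) := by
  obtain ⟨m, hm⟩ := hc
  have h1q : (0:ℝ) < 1 - q := by linarith
  have hq0' : (q:ℝ) ≠ 0 := ne_of_gt hq0
  have hqn : ∀ n : ℤ, (0:ℝ) < q ^ n := fun n => zpow_pos hq0 n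
  have hc0 : (0:ℝ) < c := by rw [hm]; exact hqn m
  have habs : ∀ n : ℤ, |(q:ℝ) ^ n| = (q:ℝ) ^ n := fun n => abs_of_pos (hqn n)
  set d : ℝ := c ^ (2 * v + 2) with hddef
  have hd0 : (0:ℝ) < d := Real.rpow_pos_of_pos hc0 _
  set k : ℝ := qSigma q v a / d with hkdef
  set g : ℤ → ℝ := fun n =>
    q ^ n * (Real.exp (-(|(q:ℝ) ^ n| ^ a)) * ((q:ℝ) ^ n) ^ (2 * v + 1)) with hgdef
  have hgsum : Summable g := hσ
  have hgpos : ∀ n, 0 < g n := fun n =>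
    mul_pos (hqn n) (mul_pos (Real.exp_pos _) (Real.rpow_pos_of_pos (hqn n) _))
  set S : ℝ := ∑' n, g n with hSdef
  have hS0 : 0 < S := Summable.tsum_pos hgsum (fun n => (hgpos n).le) 0 (hgpos 0)
  have hσeq : qSigma q v a = (1 - q) * S := rfl
  have hk0 : 0 < k := by rw [hkdef, hσeq]; positivity
  have hkd : k * d = (1 - q) * S := by
    rw [hkdef, hσeq, div_mul_cancel₀ _ (ne_of_gt hd0)]
  clear_value d k
  set gc : ℤ → ℝ := fun n =>
    q ^ n * (Real.exp (-(((q:ℝ) ^ n) ^ a * c ^ a)) * ((q:ℝ) ^ n) ^ (2 * v + 1)) with hgcdef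
  have hgcd : ∀ n : ℤ, gc n = d⁻¹ * g (n + m) := by
    intro n
    have hx := hqn n
    have hqm : (q:ℝ) ^ (n + m) = q ^ n * c := by rw [zpow_add₀ hq0', hm]
    have h2 : ((q:ℝ) ^ n * c) ^ a = ((q:ℝ) ^ n) ^ a * c ^ a := Real.mul_rpow hx.le hc0.le
    have h3 : ((q:ℝ) ^ n * c) ^ (2 * v + 1) = ((q:ℝ) ^ n) ^ (2 * v + 1) * c ^ (2 * v + 1) :=
      Real.mul_rpow hx.le hc0.le
    have h4 : d = c * c ^ (2 * v + 1) := by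
      rw [hddef, show (2 * v + 2 : ℝ) = 1 + (2 * v + 1) by ring, Real.rpow_add hc0,
        Real.rpow_one]
    have hgval : g (n + m) = d * gc n := by
      simp only [hgdef, hgcdef]
      rw [habs (n + m), hqm, h2, h3, h4]
      ring
    rw [hgval, inv_mul_cancel_left₀ (ne_of_gt hd0)]
  have hshift : Summable (fun n : ℤ => g (n + m)) := by
    have h := (Equiv.addRight m).summable_iff.mpr hgsum
    exact h
  have hgcsum : Summable gc := (summable_congr hgcd).mpr (hshift.mul_left d⁻¹)
  have hgcT : ∑' n, gc n = d⁻¹ * S := by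
    rw [tsum_congr hgcd, tsum_mul_left]
    congr 1
    have h := Equiv.tsum_eq (Equiv.addRight m) g
    rw [hSdef]
    simpa [Equiv.coe_addRight] using h
  set mA : ℤ → ℝ := fun n => q ^ n * (φ (q ^ n) * ((q:ℝ) ^ n) ^ (2 * v + 1)) with hmAdef
  set mM : ℤ → ℝ := fun n =>
    q ^ n * (|(q:ℝ) ^ n| ^ a * φ (q ^ n) * ((q:ℝ) ^ n) ^ (2 * v + 1)) with hmMdef
  set mE : ℤ → ℝ := fun n =>
    q ^ n * (φ (q ^ n) * Real.log (φ (q ^ n)) * ((q:ℝ) ^ n) ^ (2 * v + 1)) with hmEdef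
  have hAsum : Summable mA := hφsum
  have hMsum : Summable mM := hM
  have hEsum : Summable mE := hE
  set L : ℤ → ℝ := fun n =>
    (-(c ^ a)) * mM n + ((-(Real.log k)) * mA n + (-(mE n))) with hLdef
  set R : ℤ → ℝ := fun n => k⁻¹ * gc n + (-(mA n)) with hRdef
  have hLsum : Summable L := (hMsum.mul_left _).add ((hAsum.mul_left _).add hEsum.neg)
  have hRsum : Summable R := (hgcsum.mul_left _).add hAsum.neg
  have hLR : ∀ n, L n ≤ R n := by
    intro n
    have hx := hqn n
    have hφn := hφpos n
    have hψ : (0:ℝ) < Real.exp (-(((q:ℝ) ^ n) ^ a * c ^ a)) / k :=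
      div_pos (Real.exp_pos _) hk0
    have hlog : Real.log ((Real.exp (-(((q:ℝ) ^ n) ^ a * c ^ a)) / k) / φ (q ^ n))
        = -(((q:ℝ) ^ n) ^ a * c ^ a) - Real.log k - Real.log (φ (q ^ n)) := by
      rw [Real.log_div (ne_of_gt hψ) (ne_of_gt hφn),
        Real.log_div (Real.exp_ne_zero _) (ne_of_gt hk0), Real.log_exp]
    have key : φ (q ^ n) *
        (-(((q:ℝ) ^ n) ^ a * c ^ a) - Real.log k - Real.log (φ (q ^ n)))
        ≤ Real.exp (-(((q:ℝ) ^ n) ^ a * c ^ a)) / k - φ (q ^ n) := by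
      have h1 := Real.log_le_sub_one_of_pos (div_pos hψ hφn)
      have h2 := mul_le_mul_of_nonneg_left h1 hφn.le
      rw [hlog] at h2
      calc φ (q ^ n) *
          (-(((q:ℝ) ^ n) ^ a * c ^ a) - Real.log k - Real.log (φ (q ^ n)))
          ≤ φ (q ^ n) *
            ((Real.exp (-(((q:ℝ) ^ n) ^ a * c ^ a)) / k) / φ (q ^ n) - 1) := h2
        _ = Real.exp (-(((q:ℝ) ^ n) ^ a * c ^ a)) / k - φ (q ^ n) := by
            field_simp
    have hLn : L n = ((q:ℝ) ^ n * ((q:ℝ) ^ n) ^ (2 * v + 1)) *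
        (φ (q ^ n) *
          (-(((q:ℝ) ^ n) ^ a * c ^ a) - Real.log k - Real.log (φ (q ^ n)))) := by
      simp only [hLdef, hmMdef, hmAdef, hmEdef]
      rw [habs n]
      ring
    have hRn : R n = ((q:ℝ) ^ n * ((q:ℝ) ^ n) ^ (2 * v + 1)) *
        (Real.exp (-(((q:ℝ) ^ n) ^ a * c ^ a)) / k - φ (q ^ n)) := by
      simp only [hRdef, hgcdef, hmAdef]
      field_simp
      ring
    rw [hLn, hRn]
    have ht : (0:ℝ) ≤ (q:ℝ) ^ n * ((q:ℝ) ^ n) ^ (2 * v + 1) :=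
      (mul_pos hx (Real.rpow_pos_of_pos hx _)).le
    exact mul_le_mul_of_nonneg_left key ht
  have hT := Summable.tsum_le_tsum hLR hLsum hRsum
  have hTL : ∑' n, L n = (-(c ^ a)) * (∑' n, mM n) +
      ((-(Real.log k)) * (∑' n, mA n) + (-(∑' n, mE n))) := by
    simp only [hLdef]
    rw [Summable.tsum_add (hMsum.mul_left _) ((hAsum.mul_left _).add hEsum.neg),
      Summable.tsum_add (hAsum.mul_left _) hEsum.neg, tsum_mul_left, tsum_mul_left, tsum_neg]
  have hTR : ∑' n, R n = k⁻¹ * (d⁻¹ * S) + (-(∑' n, mA n)) := by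
    simp only [hRdef]
    rw [Summable.tsum_add (hgcsum.mul_left _) hAsum.neg, tsum_mul_left, tsum_neg, hgcT]
  have hAval : (1 - q) * (∑' n, mA n) = 1 := hφ1
  have hz : k⁻¹ * (d⁻¹ * S) = ∑' n, mA n := by
    have hk' : k ≠ 0 := ne_of_gt hk0
    have hd' : d ≠ 0 := ne_of_gt hd0
    have e0 : (1 - q) * (k⁻¹ * (d⁻¹ * S)) = 1 := by
      field_simp
      linear_combination -hkd
    exact mul_left_cancel₀ (ne_of_gt h1q) (by rw [e0, hAval])
  rw [hTL, hTR, hz] at hT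
  have hfin : (-(c ^ a)) * (∑' n, mM n) +
      ((-(Real.log k)) * (∑' n, mA n) + (-(∑' n, mE n))) ≤ 0 := by linarith
  have hEnt : qEntropy q v φ = (1 - q) * (∑' n, mE n) := by rw [hmEdef]; rfl
  have hMint : qInt q (fun x => |x| ^ a * φ x * x ^ (2 * v + 1))
      = (1 - q) * (∑' n, mM n) := by rw [hmMdef]; rfl
  rw [hEnt, hMint]
  have h2 := mul_le_mul_of_nonneg_left hfin h1q.le
  have h3 : Real.log k * ((1 - q) * (∑' n, mA n)) = Real.log k := by
    rw [hAval, mul_one]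
  nlinarith [h2, h3]
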